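/- Let P be a convex polygon, Λ a maximum-area P-aligned triangle, and T_a, T_m two P-aligned triangles each interleaving Λ, where T_a and T_m together subdivide the cyclic vertex sequence of P into six intervals. Then the three vertices of Λ lie in three pairwise disjoint intervals, one vertex per interval, with intervals compatible with interleaving both T_a and T_m. -/

import Mathlib

noncomputable section

/-- Twice the signed area of the triangle `p q r`. -/
def det2 (p q r : ℝ × ℝ) : ℝ :=
  (q.1 - p.1) * (r.2 - p.2) - (q.2 - p.2) * (r.1 - p.1)

/-- Area of the triangle with vertices `p`, `q`, `r`. -/
def triArea (p q r : ℝ × ℝ) : ℝ := |det2 p q r| / 2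

/-- The vertices `v 0, v 1, ...` are in strictly convex position, listed in
counterclockwise cyclic order: every three consecutive vertices make a left turn. -/
def IsConvexCCW {m : ℕ} [NeZero m] (v : Fin m → ℝ × ℝ) : Prop :=
  ∀ i : Fin m, 0 < det2 (v i) (v (i + 1)) (v (i + 1 + 1))

/-- `x` lies on the closed cyclic arc from `a` forward to `b`. -/
def btwFin {m : ℕ} (a x b : Fin m) : Prop := (x - a).val ≤ (b - a).val

/-- `x` lies strictly between `a` and `b` on the cyclic arc from `a` forward to `b`. -/
def sbtwFin {m : ℕ} (a x b : Fin m) : Prop := btwFin a x b ∧ x ≠ a ∧ x ≠ b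

/-- The triangle `△ (v r) (v b) (v c)`, with `r, b, c` in counterclockwise cyclic
order, is 2-stable rooted at `r`: replacing `b` or `c` individually by any other
vertex of the polygon (respecting the cyclic order) does not strictly increase
the area. -/
def TwoStable {m : ℕ} (v : Fin m → ℝ × ℝ) (r b c : Fin m) : Prop :=
  (∀ x : Fin m, btwFin r x c → triArea (v r) (v x) (v c) ≤ triArea (v r) (v b) (v c)) ∧
  (∀ x : Fin m, btwFin b x r → triArea (v r) (v b) (v x) ≤ triArea (v r) (v b) (v c))

/-- The triangle `△ (v p) (v q) (v r)`, with `p, q, r` in counterclockwise cyclic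
order, is 3-stable: replacing any single one of its vertices by any other vertex
of the polygon (respecting the cyclic order) does not strictly increase the area. -/
def ThreeStable {m : ℕ} (v : Fin m → ℝ × ℝ) (p q r : Fin m) : Prop :=
  (∀ x : Fin m, btwFin r x q → triArea (v x) (v q) (v r) ≤ triArea (v p) (v q) (v r)) ∧
  (∀ x : Fin m, btwFin p x r → triArea (v p) (v x) (v r) ≤ triArea (v p) (v q) (v r)) ∧
  (∀ x : Fin m, btwFin q x p → triArea (v p) (v q) (v x) ≤ triArea (v p) (v q) (v r))

/-- Two polygon-aligned triangles, given by index triples in cyclic order,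
interleave: between every two cyclically successive vertices of one there is a
vertex of the other (possibly coinciding with one of them). -/
def InterleaveTri {m : ℕ} (i j k r s t : Fin m) : Prop :=
  (∃ x ∈ ({r, s, t} : Set (Fin m)), btwFin i x j) ∧
  (∃ x ∈ ({r, s, t} : Set (Fin m)), btwFin j x k) ∧
  (∃ x ∈ ({r, s, t} : Set (Fin m)), btwFin k x i) ∧
  (∃ x ∈ ({i, j, k} : Set (Fin m)), btwFin r x s) ∧
  (∃ x ∈ ({i, j, k} : Set (Fin m)), btwFin s x t) ∧
  (∃ x ∈ ({i, j, k} : Set (Fin m)), btwFin t x r)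


section AuxBtw

variable {m : ℕ} [NeZero m]

private lemma fin_sub_val_key (a b : Fin m) :
    (a - b).val + b.val = a.val ∨ (a - b).val + b.val = a.val + m := by
  have h : b + (a - b) = a := by abel
  have h2 : ((b + (a - b)) : Fin m).val = (b.val + (a - b).val) % m := Fin.val_add _ _
  rw [h] at h2
  have hb := b.isLt
  have hs := (a - b).isLt
  have ha := a.isLt
  rcases Nat.lt_or_ge (b.val + (a - b).val) m with hlt | hge
  · left; rw [Nat.mod_eq_of_lt hlt] at h2; omega
  · right
    rw [Nat.mod_eq_sub_mod hge, Nat.mod_eq_of_lt (by omega)] at h2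
    omega

private lemma fin_val_sub_eq_zero_iff (a u : Fin m) : (a - u).val = 0 ↔ a = u := by
  constructor
  · intro h
    have : a - u = 0 := Fin.val_inj.mp (by simpa using h)
    exact sub_eq_zero.mp this
  · intro h; simp [h]

private lemma fin_val_sub_eq_iff (a b u : Fin m) : (a - u).val = (b - u).val ↔ a = b := by
  rw [Fin.val_inj, sub_left_inj]

private lemma btw_rot {p q z : Fin m} (h : btwFin p q z) (hqp : q ≠ p) : btwFin q z p := by
  unfold btwFin at h ⊢
  have e1 : z - q = (z - p) - (q - p) := by abel
  have e2 : p - q = 0 - (q - p) := by abel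
  rw [e1, e2]
  have k1 := fin_sub_val_key (z - p) (q - p)
  have k2 := fin_sub_val_key (0 : Fin m) (q - p)
  have hq0 : (q - p).val ≠ 0 := fun hc => hqp ((fin_val_sub_eq_zero_iff q p).mp hc)
  have b1 := (z - p).isLt
  have b2 := (q - p).isLt
  have b3 := ((z - p) - (q - p)).isLt
  have b4 := ((0 : Fin m) - (q - p)).isLt
  simp only [Fin.val_zero] at k2
  omega

private lemma btw_trans_right {x c d y : Fin m} (h1 : btwFin x c y) (h2 : btwFin c d y) :
    btwFin x d y := by
  unfold btwFin at h1 h2 ⊢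
  have e1 : d - x = (d - c) + (c - x) := by abel
  have e2 : y - c = (y - x) - (c - x) := by abel
  rw [e2] at h2
  rw [e1]
  have k1 := fin_sub_val_key (y - x) (c - x)
  have b1 := (y - x).isLt
  have b2 := (c - x).isLt
  have b3 := ((y - x) - (c - x)).isLt
  have b4 := (d - c).isLt
  have hlt : (d - c).val + (c - x).val < m := by omega
  rw [Fin.val_add, Nat.mod_eq_of_lt hlt]
  omega

private lemma btw_trans_left {x d c y : Fin m} (h1 : btwFin x d c) (h2 : btwFin x c y) :
    btwFin x d y := le_trans h1 h2

/-- Core step: a point `d` on the arc from `x` forward to `y`, where both `x` and `y`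
lie strictly inside `(u, w)` with `x` at or before `y`, also lies strictly inside. -/
private lemma core_sbtw {u w x y d : Fin m} (hx : sbtwFin u x w) (hy : sbtwFin u y w)
    (hord : (x - u).val ≤ (y - u).val) (hd : btwFin x d y) : sbtwFin u d w := by
  obtain ⟨hx1, hx2, hx3⟩ := hx
  obtain ⟨hy1, hy2, hy3⟩ := hy
  unfold btwFin at hx1 hy1 hd
  have hx2' : (x - u).val ≠ 0 := fun hc => hx2 ((fin_val_sub_eq_zero_iff x u).mp hc)
  have hx3' : (x - u).val ≠ (w - u).val := fun hc => hx3 ((fin_val_sub_eq_iff x w u).mp hc)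
  have hy2' : (y - u).val ≠ 0 := fun hc => hy2 ((fin_val_sub_eq_zero_iff y u).mp hc)
  have hy3' : (y - u).val ≠ (w - u).val := fun hc => hy3 ((fin_val_sub_eq_iff y w u).mp hc)
  have e1 : d - x = (d - u) - (x - u) := by abel
  have e2 : y - x = (y - u) - (x - u) := by abel
  rw [e1, e2] at hd
  have k1 := fin_sub_val_key (d - u) (x - u)
  have k2 := fin_sub_val_key (y - u) (x - u)
  have b1 := (d - u).isLt
  have b2 := (x - u).isLt
  have b3 := (y - u).isLt
  have b4 := (w - u).isLt
  have b5 := ((d - u) - (x - u)).isLt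
  have b6 := ((y - u) - (x - u)).isLt
  refine ⟨?_, fun hc => ?_, fun hc => ?_⟩
  · show (d - u).val ≤ (w - u).val
    omega
  · have : (d - u).val = 0 := (fin_val_sub_eq_zero_iff d u).mpr hc
    omega
  · have : (d - u).val = (w - u).val := (fin_val_sub_eq_iff d w u).mpr hc
    omega

/-- Main combinatorial step. If each of the three arcs of the triangle `p q z`
contains one of the three given dividing vertices, and two distinct vertices of
the triangle lie strictly inside `(u, w)`, then one of the dividing vertices
lies strictly inside `(u, w)`. -/
private lemma aux_main {p q z u w x y dpq dqz dzp : Fin m}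
    (hpq : p ≠ q) (hqz : q ≠ z) (hpz : p ≠ z) (hcyc : btwFin p q z)
    (h1 : btwFin p dpq q) (h2 : btwFin q dqz z) (h3 : btwFin z dzp p)
    (hx : x ∈ ({p, q, z} : Set (Fin m))) (hy : y ∈ ({p, q, z} : Set (Fin m)))
    (hxy : x ≠ y) (hxs : sbtwFin u x w) (hys : sbtwFin u y w)
    (hord : (x - u).val ≤ (y - u).val) :
    sbtwFin u dpq w ∨ sbtwFin u dqz w ∨ sbtwFin u dzp w := by
  have hqzp : btwFin q z p := btw_rot hcyc hpq.symm
  have hzpq : btwFin z p q := btw_rot hqzp hqz.symm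
  simp only [Set.mem_insert_iff, Set.mem_singleton_iff] at hx hy
  rcases hx with rfl | rfl | rfl <;> rcases hy with rfl | rfl | rfl
  · exact absurd rfl hxy
  · exact Or.inl (core_sbtw hxs hys hord h1)
  · exact Or.inl (core_sbtw hxs hys hord (btw_trans_left h1 hcyc))
  · exact Or.inr (Or.inr (core_sbtw hxs hys hord (btw_trans_right hqzp h3)))
  · exact absurd rfl hxy
  · exact Or.inr (Or.inl (core_sbtw hxs hys hord h2))
  · exact Or.inr (Or.inr (core_sbtw hxs hys hord h3))
  · exact Or.inl (core_sbtw hxs hys hord (btw_trans_right hzpq h1))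
  · exact absurd rfl hxy

end AuxBtw

/-- Let `Λ = △pqz` be a maximum-area polygon-aligned triangle and let the two
dividing triangles `T_a = △a1 a2 a3` and `T_m = △m1 m2 m3` each interleave `Λ`.
The six dividing vertices subdivide the cyclic vertex sequence into six
intervals; then no two distinct vertices of `Λ` lie strictly inside the same
interval, i.e. the three vertices of `Λ` lie in three pairwise disjoint
intervals, one vertex per interval. -/
theorem lambda_vertices_one_per_interval (n : ℕ) (v : Fin (n + 3) → ℝ × ℝ)
    (hP : IsConvexCCW v) (p q z a1 a2 a3 m1 m2 m3 : Fin (n + 3))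
    (hdΛ : p ≠ q ∧ q ≠ z ∧ p ≠ z) (hcycΛ : btwFin p q z)
    (hmaxΛ : ∀ x y w : Fin (n + 3),
      triArea (v x) (v y) (v w) ≤ triArea (v p) (v q) (v z))
    (hcycA : btwFin a1 a2 a3) (hcycM : btwFin m1 m2 m3)
    (hIa : InterleaveTri p q z a1 a2 a3) (hIm : InterleaveTri p q z m1 m2 m3) :
    ∀ u w : Fin (n + 3),
      u ∈ ({a1, a2, a3, m1, m2, m3} : Set (Fin (n + 3))) →
      w ∈ ({a1, a2, a3, m1, m2, m3} : Set (Fin (n + 3))) →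
      (∀ d ∈ ({a1, a2, a3, m1, m2, m3} : Set (Fin (n + 3))), ¬ sbtwFin u d w) →
      ∀ x y : Fin (n + 3), x ∈ ({p, q, z} : Set (Fin (n + 3))) →
        y ∈ ({p, q, z} : Set (Fin (n + 3))) → x ≠ y →
        ¬ (sbtwFin u x w ∧ sbtwFin u y w) := by
  intro u w hu hw hno x y hx hy hxy hcon
  obtain ⟨hxs, hys⟩ := hcon
  obtain ⟨hpq, hqz, hpz⟩ := hdΛ
  obtain ⟨⟨dpq, hdpqm, h1⟩, ⟨dqz, hdqzm, h2⟩, ⟨dzp, hdzpm, h3⟩, -, -, -⟩ := hIa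
  have hmem : ∀ d : Fin (n + 3), d ∈ ({a1, a2, a3} : Set (Fin (n + 3))) →
      d ∈ ({a1, a2, a3, m1, m2, m3} : Set (Fin (n + 3))) := by
    intro d hd
    simp only [Set.mem_insert_iff, Set.mem_singleton_iff] at hd ⊢
    tauto
  have key : sbtwFin u dpq w ∨ sbtwFin u dqz w ∨ sbtwFin u dzp w := by
    rcases le_total ((x - u) : Fin (n + 3)).val ((y - u) : Fin (n + 3)).val with hord | hord
    · exact aux_main hpq hqz hpz hcycΛ h1 h2 h3 hx hy hxy hxs hys hord
    · exact aux_main hpq hqz hpz hcycΛ h1 h2 h3 hy hx hxy.symm hys hxs hord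
  rcases key with h | h | h
  · exact hno dpq (hmem dpq hdpqm) h
  · exact hno dqz (hmem dqz hdqzm) h
  · exact hno dzp (hmem dzp hdzpm) h
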